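/- Let K be a finite field with q elements, fix integers d, r ≥ 1 and n ≥ 0, and let Λ ⊆ K^n be a K-subspace of dimension k. Then the number of tuples x = (T₁,…,T_d, v₁,…,v_r) ∈ End_K(K^n)^d × (K^n)^r with Span_K(x) = Λ equals q^{d·n·(n−k)} · u_k, where u_k is the number of full-span tuples on K^k. -/

import Mathlib

/-- `tupleSpan K T v` is the `K`-linear span of all vectors of the form
`T i₁ ∘ ⋯ ∘ T iₘ (v j)`, where `m ≥ 0` and `1 ≤ j ≤ r`. -/
def tupleSpan (K : Type*) {V : Type*} [Field K] [AddCommGroup V] [Module K V]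
    {d r : ℕ} (T : Fin d → Module.End K V) (v : Fin r → V) : Submodule K V :=
  Submodule.span K {w | ∃ (l : List (Fin d)) (j : Fin r), w = ((l.map T).prod) (v j)}

section Aux

variable {K : Type*} [Field K] {d r : ℕ}

theorem tupleSpan_map {V₁ V₂ : Type*} [AddCommGroup V₁] [Module K V₁]
    [AddCommGroup V₂] [Module K V₂]
    (f : V₁ →ₗ[K] V₂) (S : Fin d → Module.End K V₁) (T : Fin d → Module.End K V₂)
    (w : Fin r → V₁) (v : Fin r → V₂)
    (hT : ∀ i x, T i (f x) = f (S i x)) (hv : ∀ j, v j = f (w j)) :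
    tupleSpan K T v = Submodule.map f (tupleSpan K S w) := by
  have key : ∀ (l : List (Fin d)) (x : V₁),
      ((l.map T).prod) (f x) = f (((l.map S).prod) x) := by
    intro l
    induction l with
    | nil => intro x; simp
    | cons i l ih =>
        intro x
        simp only [List.map_cons, List.prod_cons, Module.End.mul_apply, ih, hT]
  rw [tupleSpan, tupleSpan, Submodule.map_span]
  congr 1
  ext z
  constructor
  · rintro ⟨l, j, rfl⟩
    exact ⟨(l.map S).prod (w j), ⟨l, j, rfl⟩, by rw [hv j, key]⟩
  · rintro ⟨_, ⟨l, j, rfl⟩, rfl⟩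
    exact ⟨l, j, by rw [hv j, key]⟩

theorem mem_tupleSpan_self {V : Type*} [AddCommGroup V] [Module K V]
    (T : Fin d → Module.End K V) (v : Fin r → V) (j : Fin r) : v j ∈ tupleSpan K T v :=
  Submodule.subset_span ⟨[], j, by simp⟩

theorem tupleSpan_apply_mem {V : Type*} [AddCommGroup V] [Module K V]
    (T : Fin d → Module.End K V) (v : Fin r → V) (i : Fin d) {x : V}
    (hx : x ∈ tupleSpan K T v) : T i x ∈ tupleSpan K T v := by
  have h1 : T i x ∈ Submodule.map (T i) (tupleSpan K T v) := Submodule.mem_map_of_mem hx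
  rw [tupleSpan, Submodule.map_span] at h1
  refine Submodule.span_le.mpr ?_ h1
  rintro z ⟨_, ⟨l, j, rfl⟩, rfl⟩
  exact Submodule.subset_span ⟨i :: l, j, by simp [Module.End.mul_apply]⟩

variable {M N : Type*} [AddCommGroup M] [Module K M] [AddCommGroup N] [Module K N]

theorem helperA (T : Fin d → Module.End K (M × N)) (v : Fin r → M × N)
    (h : tupleSpan K T v = LinearMap.ker (LinearMap.snd K M N)) :
    tupleSpan K (fun i => (LinearMap.fst K M N) ∘ₗ (T i : M × N →ₗ[K] M × N) ∘ₗ LinearMap.inl K M N)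
      (fun j => (v j).1) = ⊤ := by
  have hv0 : ∀ j, (v j).2 = 0 := by
    intro j
    have := mem_tupleSpan_self T v j
    rw [h, LinearMap.mem_ker] at this
    exact this
  have hinv : ∀ (i : Fin d) (x : M), (T i (x, 0)).2 = 0 := by
    intro i x
    have hx : ((x, 0) : M × N) ∈ tupleSpan K T v := by
      rw [h, LinearMap.mem_ker]; rfl
    have := tupleSpan_apply_mem T v i hx
    rw [h, LinearMap.mem_ker] at this
    exact this
  have hT : ∀ (i : Fin d) (x : M),
      T i (LinearMap.inl K M N x) =
        LinearMap.inl K M N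
          (((LinearMap.fst K M N) ∘ₗ (T i : M × N →ₗ[K] M × N) ∘ₗ LinearMap.inl K M N) x) := by
    intro i x
    refine Prod.ext rfl ?_
    simpa using hinv i x
  have hv : ∀ j, v j = LinearMap.inl K M N ((v j).1) := by
    intro j
    refine Prod.ext rfl ?_
    simpa using hv0 j
  have hmap := tupleSpan_map (LinearMap.inl K M N) _ T (fun j => (v j).1) v
    (fun i x => hT i x) hv
  rw [h] at hmap
  have hrange : Submodule.map (LinearMap.inl K M N) (⊤ : Submodule K M) =
      LinearMap.ker (LinearMap.snd K M N) := by
    rw [Submodule.map_top, LinearMap.range_inl]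
  exact Submodule.map_injective_of_injective LinearMap.inl_injective
    (by rw [hrange, hmap])

theorem helperB (S : Fin d → Module.End K M) (w : Fin r → M) (B : Fin d → (N →ₗ[K] M × N))
    (h : tupleSpan K S w = ⊤) :
    tupleSpan K
      (fun i => (LinearMap.inl K M N ∘ₗ (S i : M →ₗ[K] M) ∘ₗ LinearMap.fst K M N +
        B i ∘ₗ LinearMap.snd K M N : Module.End K (M × N)))
      (fun j => ((w j, 0) : M × N)) = LinearMap.ker (LinearMap.snd K M N) := by
  have hT : ∀ (i : Fin d) (x : M),
      (LinearMap.inl K M N ∘ₗ (S i : M →ₗ[K] M) ∘ₗ LinearMap.fst K M N +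
        B i ∘ₗ LinearMap.snd K M N) (LinearMap.inl K M N x) =
      LinearMap.inl K M N (S i x) := by
    intro i x
    simp
  have hv : ∀ j, ((w j, 0) : M × N) = LinearMap.inl K M N (w j) := fun j => rfl
  rw [tupleSpan_map (LinearMap.inl K M N) S _ w _ hT hv, h, Submodule.map_top,
    LinearMap.range_inl]

/-- The key bijection. -/
noncomputable def splitEquiv :
    {x : (Fin d → Module.End K (M × N)) × (Fin r → M × N) //
        tupleSpan K x.1 x.2 = LinearMap.ker (LinearMap.snd K M N)} ≃
    ({y : (Fin d → Module.End K M) × (Fin r → M) // tupleSpan K y.1 y.2 = ⊤} ×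
      (Fin d → (N →ₗ[K] M × N))) where
  toFun x := ⟨⟨⟨fun i => (LinearMap.fst K M N) ∘ₗ (x.1.1 i : M × N →ₗ[K] M × N) ∘ₗ
        LinearMap.inl K M N, fun j => (x.1.2 j).1⟩, helperA x.1.1 x.1.2 x.2⟩,
      fun i => (x.1.1 i : M × N →ₗ[K] M × N) ∘ₗ LinearMap.inr K M N⟩
  invFun y := ⟨⟨fun i => (LinearMap.inl K M N ∘ₗ (y.1.1.1 i : M →ₗ[K] M) ∘ₗ LinearMap.fst K M N +
        y.2 i ∘ₗ LinearMap.snd K M N), fun j => ((y.1.1.2 j, 0) : M × N)⟩,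
      helperB y.1.1.1 y.1.1.2 y.2 y.1.2⟩
  left_inv := by
    rintro ⟨⟨T, v⟩, hx⟩
    have hv0 : ∀ j, (v j).2 = 0 := by
      intro j
      have := mem_tupleSpan_self T v j
      rw [hx, LinearMap.mem_ker] at this
      exact this
    have hinv : ∀ (i : Fin d) (x : M), (T i (x, 0)).2 = 0 := by
      intro i x
      have hmem : ((x, 0) : M × N) ∈ tupleSpan K T v := by
        rw [hx, LinearMap.mem_ker]; rfl
      have := tupleSpan_apply_mem T v i hmem
      rw [hx, LinearMap.mem_ker] at this
      exact this
    refine Subtype.ext (Prod.ext ?_ ?_)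
    · funext i
      apply LinearMap.ext
      rintro ⟨a, b⟩
      have h1 : (((T i (a, (0 : N))).1, (0 : N)) : M × N) = T i (a, 0) :=
        (Prod.ext rfl (hinv i a).symm)
      have h2 : T i (a, (0:N)) + T i ((0:M), b) = T i (a, b) := by
        rw [← map_add]
        simp
      simp only [LinearMap.add_apply, LinearMap.comp_apply, LinearMap.inl_apply,
        LinearMap.fst_apply, LinearMap.snd_apply, LinearMap.inr_apply]
      rw [h1, h2]
    · funext j
      exact Prod.ext rfl (by simpa using (hv0 j).symm)
  right_inv := by
    rintro ⟨⟨⟨S, w⟩, hy⟩, B⟩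
    refine Prod.ext (Subtype.ext (Prod.ext ?_ ?_)) ?_
    · funext i
      apply LinearMap.ext
      intro x
      simp
    · funext j
      rfl
    · funext i
      apply LinearMap.ext
      intro y
      simp

end Aux

/-- Over a finite field with `q` elements, the number of tuples on `K^n` with span exactly a
fixed `k`-dimensional subspace `Λ` is `q^(d·n·(n-k)) · u_k`, where `u_k` is the number of
full-span tuples on `K^k`. -/
theorem stmt_5 {K : Type*} [Field K] [Fintype K] {q d r n k : ℕ}
    (hq : Fintype.card K = q) (hd : 1 ≤ d) (hr : 1 ≤ r)
    (Λ : Submodule K (Fin n → K)) (hΛ : Module.finrank K Λ = k) :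
    Nat.card {x : (Fin d → Module.End K (Fin n → K)) × (Fin r → (Fin n → K)) //
        tupleSpan K x.1 x.2 = Λ} =
      q ^ (d * n * (n - k)) *
        Nat.card {y : (Fin d → Module.End K (Fin k → K)) × (Fin r → (Fin k → K)) //
          tupleSpan K y.1 y.2 = ⊤} := by
  classical
  set m := n - k with hm
  have hfinrank_pi : Module.finrank K (Fin n → K) = n := by simp
  have hk : k ≤ n := by
    have := Submodule.finrank_le Λ
    rw [hΛ, hfinrank_pi] at this
    exact this
  have hkm : k + m = n := by omega
  obtain ⟨W, hW⟩ := Submodule.exists_isCompl Λ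
  have hWrank : Module.finrank K W = m := by
    have h1 := Submodule.finrank_add_eq_of_isCompl hW
    rw [hfinrank_pi] at h1
    omega
  let bΛ : Module.Basis (Fin k) K Λ := Module.finBasisOfFinrankEq K Λ hΛ
  let bW : Module.Basis (Fin m) K W := Module.finBasisOfFinrankEq K W hWrank
  let e : (Fin n → K) ≃ₗ[K] (Fin k → K) × (Fin m → K) :=
    (Submodule.prodEquivOfIsCompl Λ W hW).symm.trans (bΛ.equivFun.prodCongr bW.equivFun)
  have hmape : Submodule.map (e : (Fin n → K) →ₗ[K] _) Λ =
      LinearMap.ker (LinearMap.snd K (Fin k → K) (Fin m → K)) := by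
    ext z
    rw [Submodule.mem_map_equiv, LinearMap.mem_ker, LinearMap.snd_apply]
    have hesymm : e.symm z = (bΛ.equivFun.symm z.1 : Fin n → K) +
        (bW.equivFun.symm z.2 : Fin n → K) := by
      simp [e, LinearEquiv.prodCongr_symm, Submodule.coe_prodEquivOfIsCompl']
    constructor
    · intro hz
      rw [hesymm] at hz
      have h2 : ((bW.equivFun.symm z.2 : W) : Fin n → K) ∈ Λ := by
        have h1 : ((bΛ.equivFun.symm z.1 : Λ) : Fin n → K) ∈ Λ := (bΛ.equivFun.symm z.1).2
        have := Λ.sub_mem hz h1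
        simpa using this
      have hW2 : ((bW.equivFun.symm z.2 : W) : Fin n → K) ∈ W := (bW.equivFun.symm z.2).2
      have hzero : (bW.equivFun.symm z.2 : W) = 0 := by
        have := hW.disjoint.eq_bot
        have hmem : ((bW.equivFun.symm z.2 : W) : Fin n → K) ∈ Λ ⊓ W := ⟨h2, hW2⟩
        rw [this] at hmem
        exact Subtype.ext (by simpa using hmem)
      calc z.2 = bW.equivFun (bW.equivFun.symm z.2) := (bW.equivFun.apply_symm_apply z.2).symm
        _ = bW.equivFun 0 := by rw [hzero]
        _ = 0 := bW.equivFun.map_zero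
    · intro hz
      rw [hesymm, hz]
      simpa using Λ.add_mem (bΛ.equivFun.symm z.1).2 (Λ.zero_mem)
  -- transport by conjugation
  have hcard1 : Nat.card {x : (Fin d → Module.End K (Fin n → K)) × (Fin r → (Fin n → K)) //
      tupleSpan K x.1 x.2 = Λ} =
      Nat.card {x : (Fin d → Module.End K ((Fin k → K) × (Fin m → K))) ×
          (Fin r → ((Fin k → K) × (Fin m → K))) //
        tupleSpan K x.1 x.2 = LinearMap.ker (LinearMap.snd K (Fin k → K) (Fin m → K))} := by
    apply Nat.card_congr
    refine Equiv.subtypeEquiv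
      (Equiv.prodCongr (Equiv.piCongrRight fun _ => e.conj.toEquiv)
        (Equiv.piCongrRight fun _ => e.toEquiv)) ?_
    rintro ⟨T, v⟩
    have hts : tupleSpan K (fun i => e.conj (T i)) (fun j => e (v j)) =
        Submodule.map e.toLinearMap (tupleSpan K T v) := by
      refine tupleSpan_map e.toLinearMap T _ v _ ?_ ?_
      · intro i x
        simp [LinearEquiv.conj_apply]
      · intro j; rfl
    constructor
    · intro h
      simp only [Equiv.prodCongr_apply, Equiv.piCongrRight]
      show tupleSpan K (fun i => e.conj (T i)) (fun j => e (v j)) = _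
      rw [hts, h, hmape]
    · intro h
      simp only [Equiv.prodCongr_apply, Equiv.piCongrRight] at h
      replace h : tupleSpan K (fun i => e.conj (T i)) (fun j => e (v j)) =
        LinearMap.ker (LinearMap.snd K (Fin k → K) (Fin m → K)) := h
      rw [hts, ← hmape] at h
      exact Submodule.map_injective_of_injective e.injective h
  rw [hcard1, Nat.card_congr (splitEquiv), Nat.card_prod]
  have hhom : Nat.card ((Fin m → K) →ₗ[K] ((Fin k → K) × (Fin m → K))) = q ^ (n * m) := by
    rw [Nat.card_congr ((Pi.basisFun K (Fin m)).constr K).toEquiv.symm]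
    rw [Nat.card_fun, Nat.card_prod, Nat.card_fun, Nat.card_fun]
    simp only [Nat.card_eq_fintype_card, hq, Fintype.card_fin]
    rw [← pow_add, hkm, ← pow_mul]
  rw [Nat.card_fun, hhom, Nat.card_eq_fintype_card (α := Fin d), Fintype.card_fin, ← pow_mul,
    mul_comm]
  congr 1
  ring
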